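/- Let p be a prime and let M be a flat (equivalently, torsion-free) module over the ring ℤ_p of p-adic integers. Let M[[x]] denote the module of sequences ℕ → M, viewed as power series Σ aₙ xⁿ with coefficients in M, and let T : M[[x]] → M[[x]] be the ℤ_p-linear map given by multiplication by x − p, i.e., (T a)₀ = −p·a₀ and (T a)ₙ = a_{n−1} − p·aₙ for n ≥ 1. Then the cokernel of T is isomorphic as a ℤ_p-module to the p-adic completion of M, i.e., to the inverse limit lim_k M/p^k M. -/

import Mathlib

open scoped TensorProduct

section Aux

variable {R : Type*} [CommRing R] {M : Type*} [AddCommGroup M] [Module R M]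

/-- Membership in `(span {r})^k • ⊤` is divisibility by `r ^ k`. -/
lemma mem_span_pow_smul_top_iff (r : R) (k : ℕ) (x : M) :
    x ∈ ((Ideal.span {r}) ^ k • ⊤ : Submodule R M) ↔ ∃ y : M, r ^ k • y = x := by
  rw [Ideal.span_singleton_pow, Submodule.ideal_span_singleton_smul, ← SetLike.mem_coe,
    Submodule.coe_pointwise_smul, Set.mem_smul_set]
  simp

/-- Partial sums `∑_{n < k} r^n • a n`. -/
def partialSum (r : R) (a : ℕ → M) (k : ℕ) : M :=
  ∑ n ∈ Finset.range k, r ^ n • a n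

lemma partialSum_succ (r : R) (a : ℕ → M) (k : ℕ) :
    partialSum r a (k + 1) = partialSum r a k + r ^ k • a k := by
  simp [partialSum, Finset.sum_range_succ]

lemma partialSum_add (r : R) (a b : ℕ → M) (k : ℕ) :
    partialSum r (a + b) k = partialSum r a k + partialSum r b k := by
  simp [partialSum, Finset.sum_add_distrib, smul_add]

lemma partialSum_smul (r c : R) (a : ℕ → M) (k : ℕ) :
    partialSum r (c • a) k = c • partialSum r a k := by
  simp [partialSum, Finset.smul_sum, smul_comm c]

lemma partialSum_sub_mem (r : R) (a : ℕ → M) {m n : ℕ} (hmn : m ≤ n) :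
    partialSum r a n - partialSum r a m ∈ ((Ideal.span {r}) ^ m • ⊤ : Submodule R M) := by
  rw [mem_span_pow_smul_top_iff]
  refine ⟨∑ i ∈ Finset.range (n - m), r ^ i • a (m + i), ?_⟩
  rw [Finset.smul_sum]
  have : partialSum r a n = partialSum r a m +
      ∑ i ∈ Finset.range (n - m), r ^ (m + i) • a (m + i) := by
    unfold partialSum
    rw [← Finset.sum_range_add_sum_Ico _ hmn]
    congr 1
    rw [Finset.sum_Ico_eq_sum_range]
  rw [this]
  simp only [pow_add, mul_smul]
  abel

end Aux

set_option maxHeartbeats 1000000 in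
/-- Analytic `p`-completion: for a flat module `M` over the `p`-adic integers, the cokernel of
multiplication by `x - p` on the module `M⟦x⟧ = (ℕ → M)` of power series with coefficients in
`M` is the `p`-adic completion of `M`. Here `T` is multiplication by `x - p`, characterized
coefficientwise by `(T a)₀ = -p • a₀` and `(T a)ₙ = a_{n-1} - p • aₙ` for `n ≥ 1`. -/
theorem coker_mul_x_sub_p_iso_adicCompletion
    (p : ℕ) [Fact p.Prime] (M : Type*) [AddCommGroup M] [Module ℤ_[p] M]
    [Module.Flat ℤ_[p] M]
    (T : (ℕ → M) →ₗ[ℤ_[p]] (ℕ → M))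
    (hT0 : ∀ a : ℕ → M, T a 0 = -((p : ℤ_[p]) • a 0))
    (hTsucc : ∀ (a : ℕ → M) (n : ℕ), T a (n + 1) = a n - (p : ℤ_[p]) • a (n + 1)) :
    Nonempty (((ℕ → M) ⧸ LinearMap.range T) ≃ₗ[ℤ_[p]]
      AdicCompletion (Ideal.span {(p : ℤ_[p])}) M) := by
  set I : Ideal ℤ_[p] := Ideal.span {(p : ℤ_[p])} with hI
  -- p acts regularly on M by flatness
  have hpne : (p : ℤ_[p]) ≠ 0 := Nat.cast_ne_zero.mpr (Fact.out (p := p.Prime)).ne_zero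
  have hregR : IsSMulRegular ℤ_[p] ((p : ℤ_[p])) :=
    IsLeftRegular.isSMulRegular (mul_right_injective₀ hpne)
  have hreg : IsSMulRegular M ((p : ℤ_[p])) := by
    have h1 : IsSMulRegular (M ⊗[ℤ_[p]] ℤ_[p]) ((p : ℤ_[p])) := hregR.lTensor M
    have e := TensorProduct.rid ℤ_[p] M
    intro x y hxy
    have : e.symm x = e.symm y := h1 (by
      show (p : ℤ_[p]) • e.symm x = (p : ℤ_[p]) • e.symm y
      rw [← map_smul, ← map_smul]; exact congrArg e.symm hxy)
    exact e.symm.injective this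
  -- the partial-sum map into the adic completion
  have compat : ∀ (a : ℕ → M) {m n : ℕ} (hmn : m ≤ n),
      AdicCompletion.transitionMap I M hmn
        (Submodule.Quotient.mk (p := (I ^ n • ⊤ : Submodule ℤ_[p] M))
          (partialSum (p : ℤ_[p]) a n)) =
      Submodule.Quotient.mk (p := (I ^ m • ⊤ : Submodule ℤ_[p] M))
        (partialSum (p : ℤ_[p]) a m) := by
    intro a m n hmn
    show Submodule.Quotient.mk _ = Submodule.Quotient.mk _
    exact (Submodule.Quotient.eq _).2 (partialSum_sub_mem _ a hmn)
  set S : (ℕ → M) →ₗ[ℤ_[p]] AdicCompletion I M :=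
    { toFun := fun a => ⟨fun k => Submodule.Quotient.mk (partialSum (p : ℤ_[p]) a k),
        fun {m n} hmn => compat a hmn⟩
      map_add' := fun a b => by
        ext k
        show Submodule.Quotient.mk (p := (I ^ k • ⊤ : Submodule ℤ_[p] M)) (partialSum (p : ℤ_[p]) (a + b) k) = Submodule.Quotient.mk (p := (I ^ k • ⊤ : Submodule ℤ_[p] M)) (partialSum (p : ℤ_[p]) a k) + Submodule.Quotient.mk (p := (I ^ k • ⊤ : Submodule ℤ_[p] M)) (partialSum (p : ℤ_[p]) b k)
        rw [← Submodule.Quotient.mk_add, partialSum_add]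
      map_smul' := fun c a => by
        ext k
        show Submodule.Quotient.mk (p := (I ^ k • ⊤ : Submodule ℤ_[p] M)) (partialSum (p : ℤ_[p]) (c • a) k) = c • Submodule.Quotient.mk (p := (I ^ k • ⊤ : Submodule ℤ_[p] M)) (partialSum (p : ℤ_[p]) a k)
        rw [← Submodule.Quotient.mk_smul, partialSum_smul] } with hS
  have hSval : ∀ (a : ℕ → M) (k : ℕ),
      (S a).val k = Submodule.Quotient.mk (partialSum (p : ℤ_[p]) a k) := fun _ _ => rfl
  -- surjectivity
  have hsurj : Function.Surjective S := by
    intro f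
    choose b hb using fun k => Submodule.Quotient.mk_surjective _ (f.val k)
    have hdiff : ∀ k : ℕ, ∃ c : M, (p : ℤ_[p]) ^ k • c = b (k + 1) - b k := by
      intro k
      rw [← mem_span_pow_smul_top_iff, ← hI, ← Submodule.Quotient.eq]
      have h2 := f.property (Nat.le_succ k)
      rw [← hb (k + 1), ← hb k] at h2
      exact h2
    choose c hc using hdiff
    refine ⟨fun n => Nat.rec (b 1) (fun n _ => c (n + 1)) n, ?_⟩
    ext k
    rw [hSval]
    -- show partial sums equal b k for k ≥ 1
    have key : ∀ k : ℕ, partialSum (p : ℤ_[p])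
        (fun n => Nat.rec (b 1) (fun n _ => c (n + 1)) n) (k + 1) = b (k + 1) := by
      intro k
      induction k with
      | zero => simp [partialSum]
      | succ k ih =>
        rw [partialSum_succ, ih]
        show b (k + 1) + (p : ℤ_[p]) ^ (k + 1) • c (k + 1) = b (k + 2)
        rw [hc (k + 1)]
        abel
    cases k with
    | zero =>
      obtain ⟨x, hx⟩ := Submodule.Quotient.mk_surjective _ (f.val 0)
      rw [← hx]
      refine (Submodule.Quotient.eq _).2 ?_
      simp [Ideal.one_eq_top]
    | succ k => rw [key k, hb (k + 1)]
  -- kernel = range T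
  have hTsum : ∀ (b : ℕ → M) (k : ℕ),
      partialSum (p : ℤ_[p]) (T b) (k + 1) = -((p : ℤ_[p]) ^ (k + 1) • b k) := by
    intro b k
    induction k with
    | zero => simp [partialSum, hT0 b]
    | succ k ih =>
      rw [partialSum_succ, ih, hTsucc b k, smul_sub]
      have h3 : ((p : ℤ_[p])) ^ (k + 1) • ((p : ℤ_[p]) • b (k + 1)) =
          (p : ℤ_[p]) ^ (k + 2) • b (k + 1) := by
        rw [← mul_smul, ← pow_succ]
      rw [h3]
      abel
  have hker : LinearMap.ker S = LinearMap.range T := by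
    apply le_antisymm
    · intro a ha
      have hak : ∀ k : ℕ, ∃ c : M, (p : ℤ_[p]) ^ k • c = partialSum (p : ℤ_[p]) a k := by
        intro k
        rw [← mem_span_pow_smul_top_iff, ← hI]
        have : (S a).val k = 0 := by rw [ha]; rfl
        rw [hSval] at this
        exact (Submodule.Quotient.mk_eq_zero _).1 this
      choose c hc using hak
      have hc0 : c 0 = 0 := by
        have := hc 0
        simp [partialSum] at this
        exact this
      have hstep : ∀ k : ℕ, (p : ℤ_[p]) • c (k + 1) = c k + a k := by
        intro k
        have hr : IsSMulRegular M ((p : ℤ_[p]) ^ k) := hreg.pow k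
        apply hr
        show (p : ℤ_[p]) ^ k • ((p : ℤ_[p]) • c (k + 1)) = (p : ℤ_[p]) ^ k • (c k + a k)
        rw [smul_add, hc k, smul_smul, ← pow_succ, hc (k + 1), partialSum_succ]
      refine ⟨fun n => -(c (n + 1)), ?_⟩
      ext n
      cases n with
      | zero =>
        rw [hT0]
        show -((p : ℤ_[p]) • -(c 1)) = a 0
        rw [smul_neg, neg_neg, hstep 0, hc0, zero_add]
      | succ n =>
        rw [hTsucc]
        show -(c (n + 1)) - (p : ℤ_[p]) • -(c (n + 2)) = a (n + 1)
        rw [smul_neg, sub_neg_eq_add, hstep (n + 1)]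
        abel
    · rintro _ ⟨b, rfl⟩
      rw [LinearMap.mem_ker]
      ext k
      rw [hSval]
      show Submodule.Quotient.mk _ = 0
      rw [Submodule.Quotient.mk_eq_zero]
      cases k with
      | zero => simp [partialSum]
      | succ k =>
        rw [hTsum b k]
        refine neg_mem ?_
        rw [mem_span_pow_smul_top_iff]
        exact ⟨b k, rfl⟩
  exact ⟨(Submodule.quotEquivOfEq _ _ hker.symm).trans (S.quotKerEquivOfSurjective hsurj)⟩
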